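/- Let (V,*) be a magmatic algebra with * extended to T(V). Define f ⊛ g = Σ (f*g⁽¹⁾) g⁽²⁾ for f,g ∈ T(V). Then (T(V), ⊛, Δ_⧢) is a Hopf algebra (the product ⊛ is associative with unit 1, and Δ_⧢ is an algebra morphism for ⊛). -/

import Mathlib

open scoped TensorProduct

set_option maxHeartbeats 1000000
set_option synthInstance.maxHeartbeats 400000

noncomputable section

variable (K V : Type*) [Field K] [AddCommGroup V] [Module K V]

/-- The deshuffling coproduct on the tensor algebra: the unique algebra morphism
sending `x : V` to `x ⊗ 1 + 1 ⊗ x`. -/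
def deshuffle : TensorAlgebra K V →ₐ[K]
    TensorAlgebra K V ⊗[K] TensorAlgebra K V :=
  TensorAlgebra.lift K
    (((TensorProduct.mk K (TensorAlgebra K V) (TensorAlgebra K V)).flip 1) ∘ₗ TensorAlgebra.ι K
      + (TensorProduct.mk K (TensorAlgebra K V) (TensorAlgebra K V) 1) ∘ₗ TensorAlgebra.ι K)

/-- The counit of the tensor algebra: the algebra morphism killing `V`. -/
def tensorCounit : TensorAlgebra K V →ₐ[K] K :=
  TensorAlgebra.lift K (0 : V →ₗ[K] K)

variable {K V}

/-- `star` is the canonical extension to `T(V)` of the magmatic product `m` on `V`: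
(i) `f*1 = f`; (ii) `1*f = ε(f)1`; (iii) `x*(fy) = (x*f)*y − x*(f*y)`;
(iv) `(fg)*h = Σ (f*h⁽¹⁾)(g*h⁽²⁾)`, and `star` restricted to `V` is `m`. -/
def IsMagExt (m : V →ₗ[K] V →ₗ[K] V)
    (star : TensorAlgebra K V →ₗ[K] TensorAlgebra K V →ₗ[K] TensorAlgebra K V) : Prop :=
  (∀ x y : V, star (TensorAlgebra.ι K x) (TensorAlgebra.ι K y) = TensorAlgebra.ι K (m x y)) ∧
  (∀ f, star f 1 = f) ∧
  (∀ f, star 1 f = (tensorCounit K V f) • 1) ∧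
  (∀ (x : V) (f : TensorAlgebra K V) (y : V),
    star (TensorAlgebra.ι K x) (f * TensorAlgebra.ι K y)
      = star (star (TensorAlgebra.ι K x) f) (TensorAlgebra.ι K y)
        - star (TensorAlgebra.ι K x) (star f (TensorAlgebra.ι K y))) ∧
  (∀ f g h, star (f * g) h
      = LinearMap.mul' K (TensorAlgebra K V)
          (TensorProduct.map (star f) (star g) (deshuffle K V h)))


/-- The product `f ⊛ g = Σ (f*g⁽¹⁾) g⁽²⁾` on `T(V)`, as a bilinear map. -/
def circLM (star : TensorAlgebra K V →ₗ[K] TensorAlgebra K V →ₗ[K] TensorAlgebra K V) :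
    TensorAlgebra K V →ₗ[K] TensorAlgebra K V →ₗ[K] TensorAlgebra K V where
  toFun f := LinearMap.mul' K (TensorAlgebra K V)
      ∘ₗ LinearMap.rTensor (TensorAlgebra K V) (star f)
      ∘ₗ (deshuffle K V).toLinearMap
  map_add' f g := by ext h; simp [LinearMap.rTensor_add]
  map_smul' c f := by ext h; simp [LinearMap.rTensor_smul]


namespace CH

local notation "T" => TensorAlgebra K V
local notation "ιT" => TensorAlgebra.ι K (M := V)

@[simp] lemma deshuffle_ι (x : V) :
    deshuffle K V (ιT x) = ιT x ⊗ₜ[K] 1 + 1 ⊗ₜ[K] ιT x := by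
  simp [deshuffle]

@[simp] lemma counit_ι (x : V) : tensorCounit K V (ιT x) = 0 := by
  simp [tensorCounit]

local notation "η" => Algebra.linearMap K (TensorAlgebra K V)

lemma counit_right (g : T) :
    TensorProduct.map LinearMap.id (η ∘ₗ (tensorCounit K V).toLinearMap)
      (deshuffle K V g) = g ⊗ₜ[K] 1 := by
  have : (Algebra.TensorProduct.map (AlgHom.id K T)
      ((Algebra.ofId K T).comp (tensorCounit K V))).comp (deshuffle K V)
      = Algebra.TensorProduct.includeLeft := by
    ext x
    simp [Algebra.ofId_apply]
  have h2 := congrArg (fun φ => φ g) (congrArg AlgHom.toLinearMap this)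
  simp [Algebra.TensorProduct.map, Algebra.ofId, TensorProduct.AlgebraTensorModule.map_eq] at h2
  exact h2

lemma counit_left (g : T) :
    TensorProduct.map (η ∘ₗ (tensorCounit K V).toLinearMap) LinearMap.id
      (deshuffle K V g) = 1 ⊗ₜ[K] g := by
  have : (Algebra.TensorProduct.map ((Algebra.ofId K T).comp (tensorCounit K V))
      (AlgHom.id K T)).comp (deshuffle K V)
      = Algebra.TensorProduct.includeRight := by
    ext x
    simp [Algebra.ofId_apply]
  have h2 := congrArg (fun φ => φ g) (congrArg AlgHom.toLinearMap this)
  simp [Algebra.TensorProduct.map, Algebra.ofId, TensorProduct.AlgebraTensorModule.map_eq] at h2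
  exact h2

lemma counit_counit (g : T) :
    TensorProduct.lid K K (TensorProduct.map (tensorCounit K V).toLinearMap
      (tensorCounit K V).toLinearMap (deshuffle K V g)) = tensorCounit K V g := by
  have : ((Algebra.TensorProduct.lid K K).toAlgHom.comp
      (Algebra.TensorProduct.map (tensorCounit K V) (tensorCounit K V))).comp (deshuffle K V)
      = tensorCounit K V := by
    ext x
    simp
  have h2 := congrArg (fun φ => φ g) (congrArg AlgHom.toLinearMap this)
  simpa [Algebra.TensorProduct.map, TensorProduct.AlgebraTensorModule.map_eq] using h2

/-- 3-fold coassociativity, in pointwise module form. -/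
lemma coassoc (g : T) :
    TensorProduct.assoc K T T T
      (LinearMap.rTensor T (deshuffle K V).toLinearMap (deshuffle K V g))
    = LinearMap.lTensor T (deshuffle K V).toLinearMap (deshuffle K V g) := by
  have : ((Algebra.TensorProduct.assoc K K K T T T).toAlgHom.comp
        ((Algebra.TensorProduct.map (deshuffle K V) (AlgHom.id K T)).comp (deshuffle K V)))
      = (Algebra.TensorProduct.map (AlgHom.id K T) (deshuffle K V)).comp (deshuffle K V) := by
    ext x
    simp [TensorProduct.tmul_add, TensorProduct.add_tmul, Algebra.TensorProduct.one_def, add_assoc]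
  have h2 := congrArg (fun φ => φ g) (congrArg AlgHom.toLinearMap this)
  simpa [Algebra.TensorProduct.map, LinearMap.rTensor, LinearMap.lTensor,
    TensorProduct.AlgebraTensorModule.map_eq, TensorProduct.AlgebraTensorModule.assoc_eq] using h2

/-- 4-fold cocommutativity: the middle swap fixes `(Δ ⊗ Δ) (Δ g)`. -/
lemma swap4 (g : T) :
    TensorProduct.tensorTensorTensorComm K T T T T
      (TensorProduct.map (deshuffle K V).toLinearMap (deshuffle K V).toLinearMap
        (deshuffle K V g))
    = TensorProduct.map (deshuffle K V).toLinearMap (deshuffle K V).toLinearMap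
        (deshuffle K V g) := by
  have : ((Algebra.TensorProduct.tensorTensorTensorComm K K K K T T T T).toAlgHom.comp
        ((Algebra.TensorProduct.map (deshuffle K V) (deshuffle K V)).comp (deshuffle K V)))
      = (Algebra.TensorProduct.map (deshuffle K V) (deshuffle K V)).comp (deshuffle K V) := by
    ext x
    simp [TensorProduct.tmul_add, TensorProduct.add_tmul, Algebra.TensorProduct.one_def]
    abel
  have h2 := congrArg (fun φ => φ g) (congrArg AlgHom.toLinearMap this)
  simpa [Algebra.TensorProduct.map, TensorProduct.AlgebraTensorModule.map_eq] using h2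

section Machinery

variable {m : V →ₗ[K] V →ₗ[K] V}
  {star : TensorAlgebra K V →ₗ[K] TensorAlgebra K V →ₗ[K] TensorAlgebra K V}

/-- Iterated right star-multiplication by elements of `V`. -/
def it (star : TensorAlgebra K V →ₗ[K] TensorAlgebra K V →ₗ[K] TensorAlgebra K V) :
    TensorAlgebra K V → List V → TensorAlgebra K V
  | h, [] => h
  | h, y :: ys => it star (star h (ιT y)) ys

@[simp] lemma it_nil (h : T) : it star h [] = h := rfl
@[simp] lemma it_cons (h : T) (y : V) (ys : List V) :
    it star h (y :: ys) = it star (star h (ιT y)) ys := rfl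

lemma it_add (ys : List V) : ∀ h h' : T,
    it star (h + h') ys = it star h ys + it star h' ys := by
  induction ys with
  | nil => intro h h'; rfl
  | cons y ys ih => intro h h'; simp only [it_cons, map_add, LinearMap.add_apply, ih]

lemma it_smul (ys : List V) : ∀ (c : K) (h : T),
    it star (c • h) ys = c • it star h ys := by
  induction ys with
  | nil => intro c h; rfl
  | cons y ys ih => intro c h; simp only [it_cons, map_smul, LinearMap.smul_apply, ih]

lemma it_zero (ys : List V) : it star (0 : T) ys = 0 := by
  induction ys with
  | nil => rfl
  | cons y ys ih => simp only [it_cons, map_zero, LinearMap.zero_apply, ih]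

/-- The submodule of elements all of whose star-iterates lie in `M₀`. -/
def Wsub (star : TensorAlgebra K V →ₗ[K] TensorAlgebra K V →ₗ[K] TensorAlgebra K V)
    (M₀ : Submodule K (TensorAlgebra K V)) : Submodule K (TensorAlgebra K V) where
  carrier := {h | ∀ ys : List V, it star h ys ∈ M₀}
  add_mem' := fun ha hb ys => by rw [it_add]; exact add_mem (ha ys) (hb ys)
  zero_mem' := fun ys => by rw [it_zero]; exact zero_mem _
  smul_mem' := fun c h hh ys => by rw [it_smul]; exact Submodule.smul_mem _ _ (hh ys)

lemma mem_Wsub {M₀ : Submodule K (TensorAlgebra K V)} {h : T} :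
    h ∈ Wsub star M₀ ↔ ∀ ys : List V, it star h ys ∈ M₀ := Iff.rfl

theorem master (hstar : IsMagExt m star) (M₀ : Submodule K (TensorAlgebra K V))
    (h1 : (1 : T) ∈ M₀)
    (hV : ∀ u : V, ιT u ∈ M₀)
    (hstep : ∀ g : T, (∀ ys : List V, it star g ys ∈ M₀) → ∀ z : V, g * ιT z ∈ M₀) :
    ∀ g : T, g ∈ M₀ := by
  obtain ⟨hi, hone, hcou, hiv, hv⟩ := hstar
  have hstar1ι : ∀ y : V, star (1 : T) (ιT y) = 0 := fun y => by
    rw [hcou]; simp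
  have hmulι : ∀ (a : T) (z y : V), star (a * ιT z) (ιT y)
      = star a (ιT y) * ιT z + a * ιT (m z y) := by
    intro a z y
    rw [hv, deshuffle_ι]
    simp [LinearMap.mul'_apply, hone, hi]
  set W : Submodule K (TensorAlgebra K V) := Wsub star M₀ with hW
  have hWι : ∀ u : V, ιT u ∈ W := by
    have aux : ∀ (ys : List V) (u : V), ∃ w : V, it star (ιT u) ys = ιT w := by
      intro ys
      induction ys with
      | nil => exact fun u => ⟨u, rfl⟩
      | cons y ys ih => intro u; rw [it_cons, hi]; exact ih _
    intro u ys
    obtain ⟨w, hw⟩ := aux ys u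
    rw [hw]; exact hV w
  have hW1 : (1 : T) ∈ W := by
    intro ys
    cases ys with
    | nil => exact h1
    | cons y ys => rw [it_cons, hstar1ι, it_zero]; exact zero_mem _
  have hWstarι : ∀ g ∈ W, ∀ y : V, star g (ιT y) ∈ W := by
    intro g hg y ys
    exact hg (y :: ys)
  have hSQle : W * LinearMap.range (ιT) ≤ M₀ := by
    rw [Submodule.mul_le]
    rintro g hg v ⟨z, rfl⟩
    exact hstep g hg z
  have hSQclosed : ∀ s ∈ W * LinearMap.range (ιT), ∀ y : V,
      star s (ιT y) ∈ W * LinearMap.range (ιT) := by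
    intro s hs y
    refine Submodule.mul_induction_on hs (fun g hg v hv' => ?_) (fun a b hha hhb => ?_)
    · obtain ⟨z, rfl⟩ := hv'
      rw [hmulι]
      exact add_mem (Submodule.mul_mem_mul (hWstarι g hg y) ⟨z, rfl⟩)
        (Submodule.mul_mem_mul hg ⟨m z y, rfl⟩)
    · rw [map_add, LinearMap.add_apply]; exact add_mem hha hhb
  have hWmul : ∀ g ∈ W, ∀ z : V, g * ιT z ∈ W := by
    have aux : ∀ (ys : List V) (s : T), s ∈ W * LinearMap.range (ιT) →
        it star s ys ∈ W * LinearMap.range (ιT) := by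
      intro ys
      induction ys with
      | nil => exact fun s hs => hs
      | cons y ys ih => intro s hs; rw [it_cons]; exact ih _ (hSQclosed s hs y)
    intro g hg z ys
    exact hSQle (aux ys _ (Submodule.mul_mem_mul hg ⟨z, rfl⟩))
  have main : ∀ g : T, g ∈ W ∧ ∀ h ∈ W, h * g ∈ W := by
    intro g
    induction g using TensorAlgebra.induction with
    | algebraMap c =>
      rw [Algebra.algebraMap_eq_smul_one]
      exact ⟨Submodule.smul_mem _ _ hW1, fun h hh => by
        rw [mul_smul_comm, mul_one]; exact Submodule.smul_mem _ _ hh⟩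
    | ι x => exact ⟨hWι x, fun h hh => hWmul h hh x⟩
    | mul a b iha ihb =>
      exact ⟨ihb.2 a iha.1, fun h hh => by
        rw [← mul_assoc]; exact ihb.2 _ (iha.2 h hh)⟩
    | add a b iha ihb =>
      exact ⟨add_mem iha.1 ihb.1, fun h hh => by
        rw [mul_add]; exact add_mem (iha.2 h hh) (ihb.2 h hh)⟩
  exact fun g => (main g).1 []

/-- Key structural fact: `x * g` lies in `V` for `x ∈ V`. -/
theorem star_ι_mem (hstar : IsMagExt m star) (g : T) (x : V) :
    star (ιT x) g ∈ LinearMap.range (ιT) := by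
  let M₀ : Submodule K (TensorAlgebra K V) :=
    { carrier := {h | ∀ x : V, star (ιT x) h ∈ LinearMap.range (ιT)}
      add_mem' := fun ha hb x => by rw [map_add]; exact add_mem (ha x) (hb x)
      zero_mem' := fun x => by rw [map_zero]; exact zero_mem _
      smul_mem' := fun c h hh x => by rw [map_smul]; exact Submodule.smul_mem _ _ (hh x) }
  have : ∀ g : T, g ∈ M₀ := by
    apply master hstar
    · intro x; rw [hstar.2.1]; exact ⟨x, rfl⟩
    · intro u x; rw [hstar.1]; exact ⟨m x u, rfl⟩
    · intro g hg z x
      rw [hstar.2.2.2.1]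
      apply sub_mem
      · obtain ⟨u, hu⟩ := hg [] x
        rw [it_nil] at hu
        rw [← hu, hstar.1]
        exact ⟨m u z, rfl⟩
      · exact hg [z] x
  exact this g x

end Machinery

section Compat

variable {m : V →ₗ[K] V →ₗ[K] V}
  {star : TensorAlgebra K V →ₗ[K] TensorAlgebra K V →ₗ[K] TensorAlgebra K V}

/-- `Σ (f¹ * g¹) ⊗ (f² * g²)` as a map of `Δf`, `Δg`. -/
def sOp (star : TensorAlgebra K V →ₗ[K] TensorAlgebra K V →ₗ[K] TensorAlgebra K V) :
    TensorAlgebra K V ⊗[K] TensorAlgebra K V →ₗ[K]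
      (TensorAlgebra K V ⊗[K] TensorAlgebra K V →ₗ[K]
        TensorAlgebra K V ⊗[K] TensorAlgebra K V) :=
  (TensorProduct.homTensorHomMap (RingHom.id K) (TensorAlgebra K V) (TensorAlgebra K V)
    (TensorAlgebra K V) (TensorAlgebra K V)) ∘ₗ TensorProduct.map star star

@[simp] lemma sOp_tmul (a b : T) :
    sOp star (a ⊗ₜ[K] b) = TensorProduct.map (star a) (star b) := by
  simp [sOp]

lemma star_one_eq (hstar : IsMagExt m star) :
    star (1 : T) = Algebra.linearMap K (TensorAlgebra K V) ∘ₗ (tensorCounit K V).toLinearMap := by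
  ext f
  rw [hstar.2.2.1]
  simp [Algebra.algebraMap_eq_smul_one]

/-- `ε (f * g) = ε f · ε g`. -/
theorem counit_star (hstar : IsMagExt m star) (f g : T) :
    tensorCounit K V (star f g) = tensorCounit K V f * tensorCounit K V g := by
  induction f using TensorAlgebra.induction generalizing g with
  | algebraMap c =>
    rw [Algebra.algebraMap_eq_smul_one, map_smul, LinearMap.smul_apply, hstar.2.2.1]
    simp [mul_comm, mul_assoc, mul_left_comm]
  | ι x =>
    obtain ⟨u, hu⟩ := star_ι_mem hstar g x
    rw [← hu, counit_ι, counit_ι, zero_mul]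
  | mul a b iha ihb =>
    rw [hstar.2.2.2.2]
    have claim : ∀ ξ : T ⊗[K] T,
        tensorCounit K V (LinearMap.mul' K (TensorAlgebra K V)
          (TensorProduct.map (star a) (star b) ξ))
        = (tensorCounit K V a * tensorCounit K V b) *
            TensorProduct.lid K K (TensorProduct.map (tensorCounit K V).toLinearMap
              (tensorCounit K V).toLinearMap ξ) := by
      intro ξ
      induction ξ using TensorProduct.induction_on with
      | zero => simp
      | tmul p q =>
        simp only [TensorProduct.map_tmul, LinearMap.mul'_apply, map_mul, iha, ihb,
          TensorProduct.lid_tmul, AlgHom.toLinearMap_apply, smul_eq_mul]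
        ring
      | add ξ₁ ξ₂ ih₁ ih₂ => simp only [map_add, ih₁, ih₂, mul_add]
    rw [claim, counit_counit, map_mul]
  | add a b iha ihb => simp only [map_add, LinearMap.add_apply, iha, ihb, add_mul]

/-- `(ε ⊗ ε) (Δ g) = 1 ⊗ ε g`. -/
lemma counit_counit' (g : T) :
    TensorProduct.map (tensorCounit K V).toLinearMap (tensorCounit K V).toLinearMap
      (deshuffle K V g) = (1 : K) ⊗ₜ[K] tensorCounit K V g := by
  have h := counit_counit (K := K) (V := V) g
  calc TensorProduct.map (tensorCounit K V).toLinearMap (tensorCounit K V).toLinearMap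
        (deshuffle K V g)
      = (TensorProduct.lid K K).symm (TensorProduct.lid K K
          (TensorProduct.map (tensorCounit K V).toLinearMap (tensorCounit K V).toLinearMap
            (deshuffle K V g))) := by rw [LinearEquiv.symm_apply_apply]
    _ = (TensorProduct.lid K K).symm (tensorCounit K V g) := by rw [h]
    _ = (1 : K) ⊗ₜ[K] tensorCounit K V g := by rw [TensorProduct.lid_symm_apply]

lemma sOp_one (hstar : IsMagExt m star) (g : T) :
    sOp star (1 : TensorAlgebra K V ⊗[K] TensorAlgebra K V) (deshuffle K V g)
      = tensorCounit K V g • (1 : TensorAlgebra K V ⊗[K] TensorAlgebra K V) := by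
  rw [Algebra.TensorProduct.one_def, sOp_tmul, star_one_eq hstar]
  have hsplit : TensorProduct.map
      (Algebra.linearMap K (TensorAlgebra K V) ∘ₗ (tensorCounit K V).toLinearMap)
      (Algebra.linearMap K (TensorAlgebra K V) ∘ₗ (tensorCounit K V).toLinearMap)
      = TensorProduct.map (Algebra.linearMap K (TensorAlgebra K V))
          (Algebra.linearMap K (TensorAlgebra K V)) ∘ₗ
        TensorProduct.map (tensorCounit K V).toLinearMap (tensorCounit K V).toLinearMap := by
    rw [← TensorProduct.map_comp]
  rw [hsplit, LinearMap.comp_apply, counit_counit', TensorProduct.map_tmul]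
  simp [Algebra.TensorProduct.one_def, Algebra.algebraMap_eq_smul_one,
    TensorProduct.smul_tmul', TensorProduct.tmul_smul]

set_option maxHeartbeats 1000000 in
/-- `Δ (f * g) = Σ (f¹ * g¹) ⊗ (f² * g²)`. -/
theorem deshuffle_star (hstar : IsMagExt m star) (f g : T) :
    deshuffle K V (star f g) = sOp star (deshuffle K V f) (deshuffle K V g) := by
  induction f using TensorAlgebra.induction generalizing g with
  | algebraMap c =>
    have L : star ((algebraMap K (TensorAlgebra K V)) c) g
        = c • ((tensorCounit K V g) • (1 : T)) := by
      rw [Algebra.algebraMap_eq_smul_one, map_smul, LinearMap.smul_apply, hstar.2.2.1]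
    have R1 : deshuffle K V ((algebraMap K (TensorAlgebra K V)) c)
        = c • (1 : TensorAlgebra K V ⊗[K] TensorAlgebra K V) := by
      rw [AlgHom.commutes, Algebra.algebraMap_eq_smul_one]
    have hsmul : (sOp star) (c • (1 : TensorAlgebra K V ⊗[K] TensorAlgebra K V))
        = c • sOp star 1 := map_smul _ _ _
    rw [L, map_smul, map_smul, map_one, R1, hsmul, LinearMap.smul_apply, sOp_one hstar]
  | ι x =>
    obtain ⟨u, hu⟩ := star_ι_mem hstar g x
    rw [← hu, deshuffle_ι, hu, deshuffle_ι, map_add, LinearMap.add_apply, sOp_tmul, sOp_tmul,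
      star_one_eq hstar]
    have t1 : TensorProduct.map (star (ιT x))
        (Algebra.linearMap K (TensorAlgebra K V) ∘ₗ (tensorCounit K V).toLinearMap)
        (deshuffle K V g) = star (ιT x) g ⊗ₜ[K] 1 := by
      have hs : TensorProduct.map (star (ιT x))
          (Algebra.linearMap K (TensorAlgebra K V) ∘ₗ (tensorCounit K V).toLinearMap)
          = TensorProduct.map (star (ιT x)) LinearMap.id ∘ₗ
            TensorProduct.map LinearMap.id
              (Algebra.linearMap K (TensorAlgebra K V) ∘ₗ (tensorCounit K V).toLinearMap) := by
        rw [← TensorProduct.map_comp]; rfl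
      rw [hs, LinearMap.comp_apply, counit_right, TensorProduct.map_tmul]; rfl
    have t2 : TensorProduct.map
        (Algebra.linearMap K (TensorAlgebra K V) ∘ₗ (tensorCounit K V).toLinearMap)
        (star (ιT x)) (deshuffle K V g) = (1 : T) ⊗ₜ[K] star (ιT x) g := by
      have hs : TensorProduct.map
          (Algebra.linearMap K (TensorAlgebra K V) ∘ₗ (tensorCounit K V).toLinearMap)
          (star (ιT x))
          = TensorProduct.map LinearMap.id (star (ιT x)) ∘ₗ
            TensorProduct.map
              (Algebra.linearMap K (TensorAlgebra K V) ∘ₗ (tensorCounit K V).toLinearMap)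
              LinearMap.id := by
        rw [← TensorProduct.map_comp]; rfl
      rw [hs, LinearMap.comp_apply, counit_left, TensorProduct.map_tmul]; rfl
    rw [t1, t2]
  | mul a b iha ihb =>
    rw [hstar.2.2.2.2]
    have claim1 : ∀ ξ : TensorAlgebra K V ⊗[K] TensorAlgebra K V,
        deshuffle K V (LinearMap.mul' K (TensorAlgebra K V)
          (TensorProduct.map (star a) (star b) ξ))
        = LinearMap.mul' K (TensorAlgebra K V ⊗[K] TensorAlgebra K V)
            (TensorProduct.map (sOp star (deshuffle K V a)) (sOp star (deshuffle K V b))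
              (TensorProduct.map (deshuffle K V).toLinearMap (deshuffle K V).toLinearMap ξ)) := by
      intro ξ
      induction ξ using TensorProduct.induction_on with
      | zero => simp only [map_zero]
      | tmul p q =>
        simp only [TensorProduct.map_tmul, LinearMap.mul'_apply, map_mul, iha, ihb,
          AlgHom.toLinearMap_apply]
      | add ξ₁ ξ₂ ih₁ ih₂ => simp only [map_add, ih₁, ih₂]
    have claim2 : ∀ A B ξ : TensorAlgebra K V ⊗[K] TensorAlgebra K V, sOp star (A * B) ξ
        = LinearMap.mul' K (TensorAlgebra K V ⊗[K] TensorAlgebra K V)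
            (TensorProduct.map (sOp star A) (sOp star B)
              (TensorProduct.tensorTensorTensorComm K
                  (TensorAlgebra K V) (TensorAlgebra K V) (TensorAlgebra K V) (TensorAlgebra K V)
                (TensorProduct.map (deshuffle K V).toLinearMap (deshuffle K V).toLinearMap ξ))) := by
      intro A B ξ
      induction A using TensorProduct.induction_on with
      | zero => simp only [zero_mul, map_zero, LinearMap.zero_apply,
          TensorProduct.map_zero_left]
      | add A₁ A₂ ih₁ ih₂ =>
        simp only [add_mul, map_add, LinearMap.add_apply, TensorProduct.map_add_left, ih₁, ih₂]
      | tmul u₁ u₂ =>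
        induction B using TensorProduct.induction_on with
        | zero => simp only [mul_zero, map_zero, LinearMap.zero_apply,
            TensorProduct.map_zero_right]
        | add B₁ B₂ ih₁ ih₂ =>
          simp only [mul_add, map_add, LinearMap.add_apply, TensorProduct.map_add_right, ih₁, ih₂]
        | tmul v₁ v₂ =>
          induction ξ using TensorProduct.induction_on with
          | zero => simp only [map_zero]
          | add ξ₁ ξ₂ ih₁ ih₂ => simp only [map_add, LinearMap.add_apply, ih₁, ih₂]
          | tmul w₁ w₂ =>
            simp only [Algebra.TensorProduct.tmul_mul_tmul, sOp_tmul, TensorProduct.map_tmul,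
              hstar.2.2.2.2, AlgHom.toLinearMap_apply]
            have lin : ∀ ξ₁ ξ₂ : TensorAlgebra K V ⊗[K] TensorAlgebra K V,
                (LinearMap.mul' K (TensorAlgebra K V)
                    (TensorProduct.map (star u₁) (star v₁) ξ₁))
                  ⊗ₜ[K]
                (LinearMap.mul' K (TensorAlgebra K V)
                    (TensorProduct.map (star u₂) (star v₂) ξ₂))
                = LinearMap.mul' K (TensorAlgebra K V ⊗[K] TensorAlgebra K V)
                    (TensorProduct.map (TensorProduct.map (star u₁) (star u₂))
                      (TensorProduct.map (star v₁) (star v₂))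
                      (TensorProduct.tensorTensorTensorComm K (TensorAlgebra K V)
                        (TensorAlgebra K V) (TensorAlgebra K V) (TensorAlgebra K V)
                        (ξ₁ ⊗ₜ[K] ξ₂))) := by
              intro ξ₁ ξ₂
              induction ξ₁ using TensorProduct.induction_on with
              | zero => simp only [map_zero, TensorProduct.zero_tmul]
              | add χ₁ χ₂ ih₁ ih₂ =>
                simp only [map_add, TensorProduct.add_tmul, ih₁, ih₂]
              | tmul c₁ c₂ =>
                induction ξ₂ using TensorProduct.induction_on with
                | zero => simp only [map_zero, TensorProduct.tmul_zero]
                | add χ₁ χ₂ ih₁ ih₂ =>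
                  simp only [map_add, TensorProduct.tmul_add, ih₁, ih₂]
                | tmul d₁ d₂ =>
                  simp only [TensorProduct.map_tmul, LinearMap.mul'_apply,
                    TensorProduct.tensorTensorTensorComm_tmul,
                    Algebra.TensorProduct.tmul_mul_tmul]
            exact lin _ _
    rw [claim1, map_mul, claim2, swap4]
  | add a b iha ihb =>
    simp only [map_add, LinearMap.add_apply, iha, ihb]

end Compat

section Key

variable {m : V →ₗ[K] V →ₗ[K] V}
  {star : TensorAlgebra K V →ₗ[K] TensorAlgebra K V →ₗ[K] TensorAlgebra K V}

lemma star_prod_iota (hstar : IsMagExt m star) (A B : T) (z : V) :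
    star (A * B) (ιT z) = star A (ιT z) * B + A * star B (ιT z) := by
  rw [hstar.2.2.2.2, deshuffle_ι]
  simp [LinearMap.mul'_apply, hstar.2.1]

/-- The recursion (iii) holds with arbitrary first argument. -/
theorem star_mul_iota (hstar : IsMagExt m star) (a f : T) (z : V) :
    star a (f * ιT z) = star (star a f) (ιT z) - star a (star f (ιT z)) := by
  induction a using TensorAlgebra.induction generalizing f z with
  | algebraMap c =>
    rw [Algebra.algebraMap_eq_smul_one]
    simp only [map_smul, LinearMap.smul_apply, hstar.2.2.1, map_mul, counit_ι,
      counit_star hstar, mul_zero, zero_smul, smul_zero, sub_zero]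
  | ι x => exact hstar.2.2.2.1 x f z
  | add a b iha ihb =>
    simp only [map_add, LinearMap.add_apply, iha, ihb]
    abel
  | mul a b iha ihb =>
    rw [hstar.2.2.2.2 a b (f * ιT z), hstar.2.2.2.2 a b f, hstar.2.2.2.2 a b (star f (ιT z)),
      map_mul, deshuffle_ι, deshuffle_star hstar f (ιT z), deshuffle_ι]
    have claim : ∀ ξ : TensorAlgebra K V ⊗[K] TensorAlgebra K V,
        LinearMap.mul' K (TensorAlgebra K V) (TensorProduct.map (star a) (star b)
          (ξ * (ιT z ⊗ₜ[K] 1 + 1 ⊗ₜ[K] ιT z)))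
        = star (LinearMap.mul' K (TensorAlgebra K V)
            (TensorProduct.map (star a) (star b) ξ)) (ιT z)
          - LinearMap.mul' K (TensorAlgebra K V) (TensorProduct.map (star a) (star b)
              (sOp star ξ (ιT z ⊗ₜ[K] 1 + 1 ⊗ₜ[K] ιT z))) := by
      intro ξ
      induction ξ using TensorProduct.induction_on with
      | zero => simp only [zero_mul, map_zero, LinearMap.zero_apply, sub_zero]
      | add ξ₁ ξ₂ ih₁ ih₂ =>
        simp only [add_mul, map_add, LinearMap.add_apply, ih₁, ih₂]
        abel
      | tmul p q =>
        have expand : (p ⊗ₜ[K] q) * (ιT z ⊗ₜ[K] 1 + 1 ⊗ₜ[K] ιT z)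
            = (p * ιT z) ⊗ₜ[K] q + p ⊗ₜ[K] (q * ιT z) := by
          simp [mul_add, Algebra.TensorProduct.tmul_mul_tmul]
        rw [expand]
        simp only [map_add, TensorProduct.map_tmul, LinearMap.mul'_apply, sOp_tmul,
          LinearMap.add_apply, hstar.2.1, iha, ihb]
        rw [star_prod_iota hstar]
        simp only [sub_mul, mul_sub]
        abel
    exact claim (deshuffle K V f)

@[simp] lemma circ_apply (f g : T) :
    circLM star f g = LinearMap.mul' K (TensorAlgebra K V)
      (LinearMap.rTensor (TensorAlgebra K V) (star f) (deshuffle K V g)) := rfl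

lemma circ_one (hstar : IsMagExt m star) (f : T) : circLM star f 1 = f := by
  rw [circ_apply, map_one, Algebra.TensorProduct.one_def]
  simp [hstar.2.1]

lemma one_circ (hstar : IsMagExt m star) (f : T) : circLM star 1 f = f := by
  rw [circ_apply, star_one_eq hstar]
  have : LinearMap.rTensor (TensorAlgebra K V)
      (Algebra.linearMap K (TensorAlgebra K V) ∘ₗ (tensorCounit K V).toLinearMap)
      (deshuffle K V f) = (1 : T) ⊗ₜ[K] f := counit_left f
  rw [this, LinearMap.mul'_apply, one_mul]

/-- `b ⊛ (f·z) = (b ⊛ f)·z + (b ⊛ f)*z − b ⊛ (f*z)`. -/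
lemma circ_mul_iota (hstar : IsMagExt m star) (b f : T) (z : V) :
    circLM star b (f * ιT z)
      = circLM star b f * ιT z + star (circLM star b f) (ιT z)
        - circLM star b (star f (ιT z)) := by
  rw [circ_apply, circ_apply, circ_apply, map_mul, deshuffle_ι,
    deshuffle_star hstar f (ιT z), deshuffle_ι]
  have claim : ∀ ξ : TensorAlgebra K V ⊗[K] TensorAlgebra K V,
      LinearMap.mul' K (TensorAlgebra K V) (LinearMap.rTensor (TensorAlgebra K V) (star b)
        (ξ * (ιT z ⊗ₜ[K] 1 + 1 ⊗ₜ[K] ιT z)))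
      = LinearMap.mul' K (TensorAlgebra K V)
          (LinearMap.rTensor (TensorAlgebra K V) (star b) ξ) * ιT z
        + star (LinearMap.mul' K (TensorAlgebra K V)
            (LinearMap.rTensor (TensorAlgebra K V) (star b) ξ)) (ιT z)
        - LinearMap.mul' K (TensorAlgebra K V) (LinearMap.rTensor (TensorAlgebra K V) (star b)
            (sOp star ξ (ιT z ⊗ₜ[K] 1 + 1 ⊗ₜ[K] ιT z))) := by
    intro ξ
    induction ξ using TensorProduct.induction_on with
    | zero => simp only [zero_mul, map_zero, LinearMap.zero_apply, sub_zero, add_zero, zero_add]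
    | add ξ₁ ξ₂ ih₁ ih₂ =>
      simp only [add_mul, map_add, LinearMap.add_apply, ih₁, ih₂]
      abel
    | tmul p q =>
      have expand : (p ⊗ₜ[K] q) * (ιT z ⊗ₜ[K] 1 + 1 ⊗ₜ[K] ιT z)
          = (p * ιT z) ⊗ₜ[K] q + p ⊗ₜ[K] (q * ιT z) := by
        simp [mul_add, Algebra.TensorProduct.tmul_mul_tmul]
      rw [expand]
      simp only [map_add, LinearMap.rTensor_tmul, LinearMap.mul'_apply, sOp_tmul,
        LinearMap.add_apply, TensorProduct.map_tmul, hstar.2.1]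
      rw [star_mul_iota hstar b p z, star_prod_iota hstar]
      simp only [sub_mul, mul_sub, mul_assoc]
      abel
  exact claim (deshuffle K V f)

/-- Key lemma: `a * (b ⊛ c) = (a * b) * c`. -/
theorem star_circ (hstar : IsMagExt m star) (c a b : T) :
    star a (circLM star b c) = star (star a b) c := by
  let M₀ : Submodule K (TensorAlgebra K V) :=
    { carrier := {c | ∀ a b : T, star a (circLM star b c) = star (star a b) c}
      add_mem' := fun hc hc' a b => by
        rw [map_add, map_add, map_add, hc a b, hc' a b]
      zero_mem' := fun a b => by rw [map_zero, map_zero, map_zero]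
      smul_mem' := fun k c hc a b => by
        rw [map_smul, map_smul, map_smul, hc a b] }
  have : ∀ c : T, c ∈ M₀ := by
    apply master hstar
    · intro a b
      rw [circ_one hstar, hstar.2.1]
    · intro u a b
      have hcirc : circLM star b (ιT u) = star b (ιT u) + b * ιT u := by
        rw [circ_apply, deshuffle_ι]
        simp [hstar.2.1]
      rw [hcirc, map_add, star_mul_iota hstar a b u]
      abel
    · intro f hf z a b
      rw [circ_mul_iota hstar b f z, map_sub, map_add, star_mul_iota hstar a (circLM star b f) z]
      have h0 : star a (circLM star b f) = star (star a b) f := hf [] a b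
      have h1 : star a (circLM star b (star f (ιT z)))
          = star (star a b) (star f (ιT z)) := hf [z] a b
      rw [h0, h1, star_mul_iota hstar (star a b) f z]
      abel
  exact this c a b

end Key

section Final

variable {m : V →ₗ[K] V →ₗ[K] V}
  {star : TensorAlgebra K V →ₗ[K] TensorAlgebra K V →ₗ[K] TensorAlgebra K V}

/-- `Δ` is multiplicative for `⊛`. -/
theorem deshuffle_circ (hstar : IsMagExt m star) (f g : T) :
    deshuffle K V (circLM star f g)
      = TensorProduct.homTensorHomMap (RingHom.id K) (TensorAlgebra K V) (TensorAlgebra K V)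
          (TensorAlgebra K V) (TensorAlgebra K V)
          (TensorProduct.map (circLM star) (circLM star) (deshuffle K V f))
          (deshuffle K V g) := by
  have claim1 : ∀ ξ : TensorAlgebra K V ⊗[K] TensorAlgebra K V,
      deshuffle K V (LinearMap.mul' K (TensorAlgebra K V)
        (LinearMap.rTensor (TensorAlgebra K V) (star f) ξ))
      = LinearMap.mul' K (TensorAlgebra K V ⊗[K] TensorAlgebra K V)
          (LinearMap.rTensor (TensorAlgebra K V ⊗[K] TensorAlgebra K V)
            (sOp star (deshuffle K V f))
            (TensorProduct.map (deshuffle K V).toLinearMap (deshuffle K V).toLinearMap ξ)) := by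
    intro ξ
    induction ξ using TensorProduct.induction_on with
    | zero => simp only [map_zero]
    | add ξ₁ ξ₂ ih₁ ih₂ => simp only [map_add, ih₁, ih₂]
    | tmul p q =>
      simp only [LinearMap.rTensor_tmul, LinearMap.mul'_apply, map_mul,
        TensorProduct.map_tmul, AlgHom.toLinearMap_apply, deshuffle_star hstar f p]
  have claim2 : ∀ (A ζ : TensorAlgebra K V ⊗[K] TensorAlgebra K V),
      TensorProduct.homTensorHomMap (RingHom.id K) (TensorAlgebra K V) (TensorAlgebra K V)
        (TensorAlgebra K V) (TensorAlgebra K V)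
        (TensorProduct.map (circLM star) (circLM star) A) ζ
      = LinearMap.mul' K (TensorAlgebra K V ⊗[K] TensorAlgebra K V)
          (LinearMap.rTensor (TensorAlgebra K V ⊗[K] TensorAlgebra K V) (sOp star A)
            (TensorProduct.tensorTensorTensorComm K (TensorAlgebra K V) (TensorAlgebra K V)
                (TensorAlgebra K V) (TensorAlgebra K V)
              (TensorProduct.map (deshuffle K V).toLinearMap (deshuffle K V).toLinearMap ζ))) := by
    intro A ζ
    induction A using TensorProduct.induction_on with
    | zero => simp only [map_zero, LinearMap.zero_apply, LinearMap.rTensor_zero,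
        TensorProduct.map_zero_left]
    | add A₁ A₂ ih₁ ih₂ =>
      simp only [map_add, LinearMap.add_apply, LinearMap.rTensor_add,
        TensorProduct.map_add_left, ih₁, ih₂]
    | tmul u v =>
      induction ζ using TensorProduct.induction_on with
      | zero => simp only [map_zero]
      | add ζ₁ ζ₂ ih₁ ih₂ => simp only [map_add, LinearMap.add_apply, ih₁, ih₂]
      | tmul w₁ w₂ =>
        simp only [TensorProduct.map_tmul, TensorProduct.homTensorHomMap_apply,
          AlgHom.toLinearMap_apply, circ_apply]
        generalize deshuffle K V w₁ = ξ₁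
        generalize deshuffle K V w₂ = ξ₂
        induction ξ₁ using TensorProduct.induction_on with
        | zero => simp only [map_zero, TensorProduct.zero_tmul]
        | add χ₁ χ₂ ih₁ ih₂ => simp only [map_add, TensorProduct.add_tmul, ih₁, ih₂]
        | tmul c₁ c₂ =>
          induction ξ₂ using TensorProduct.induction_on with
          | zero => simp only [map_zero, TensorProduct.tmul_zero]
          | add χ₁ χ₂ ih₁ ih₂ => simp only [map_add, TensorProduct.tmul_add, ih₁, ih₂]
          | tmul d₁ d₂ =>
            simp only [TensorProduct.map_tmul, LinearMap.rTensor_tmul, LinearMap.mul'_apply,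
              TensorProduct.tensorTensorTensorComm_tmul, sOp_tmul,
              Algebra.TensorProduct.tmul_mul_tmul]
  rw [circ_apply, claim1, claim2, swap4]

/-- `⊛` is associative. -/
theorem circ_assoc (hstar : IsMagExt m star) (f g h : T) :
    circLM star (circLM star f g) h = circLM star f (circLM star g h) := by
  have claim_s : ∀ w : T, star (circLM star f g) w
      = LinearMap.mul' K (TensorAlgebra K V)
          (sOp star (LinearMap.rTensor (TensorAlgebra K V) (star f) (deshuffle K V g))
            (deshuffle K V w)) := by
    intro w
    rw [circ_apply]
    generalize deshuffle K V g = ξ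
    induction ξ using TensorProduct.induction_on with
    | zero => simp only [map_zero, LinearMap.zero_apply]
    | add ξ₁ ξ₂ ih₁ ih₂ =>
      simp only [map_add, LinearMap.add_apply, ih₁, ih₂]
    | tmul p q =>
      simp only [LinearMap.rTensor_tmul, LinearMap.mul'_apply, sOp_tmul]
      rw [hstar.2.2.2.2]
  have claim_L : ∀ θ : TensorAlgebra K V ⊗[K] TensorAlgebra K V,
      LinearMap.mul' K (TensorAlgebra K V)
        (LinearMap.rTensor (TensorAlgebra K V) (star (circLM star f g)) θ)
      = LinearMap.mul' K (TensorAlgebra K V)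
          (LinearMap.rTensor (TensorAlgebra K V)
            (LinearMap.mul' K (TensorAlgebra K V) ∘ₗ
              sOp star (LinearMap.rTensor (TensorAlgebra K V) (star f) (deshuffle K V g)))
            (LinearMap.rTensor (TensorAlgebra K V) (deshuffle K V).toLinearMap θ)) := by
    intro θ
    induction θ using TensorProduct.induction_on with
    | zero => simp only [map_zero]
    | add θ₁ θ₂ ih₁ ih₂ => simp only [map_add, ih₁, ih₂]
    | tmul w₁ w₂ =>
      simp only [LinearMap.rTensor_tmul, LinearMap.mul'_apply, LinearMap.comp_apply,
        AlgHom.toLinearMap_apply, claim_s w₁]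
  have claim_R : ∀ (A : TensorAlgebra K V ⊗[K] TensorAlgebra K V)
      (θ : TensorAlgebra K V ⊗[K] TensorAlgebra K V),
      LinearMap.mul' K (TensorAlgebra K V)
        (LinearMap.rTensor (TensorAlgebra K V) (star f)
          (TensorProduct.homTensorHomMap (RingHom.id K) (TensorAlgebra K V) (TensorAlgebra K V)
            (TensorAlgebra K V) (TensorAlgebra K V)
            (TensorProduct.map (circLM star) (circLM star) A) θ))
      = LinearMap.mul' K (TensorAlgebra K V)
          (LinearMap.rTensor (TensorAlgebra K V)
            (LinearMap.mul' K (TensorAlgebra K V) ∘ₗ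
              sOp star (LinearMap.rTensor (TensorAlgebra K V) (star f) A))
            ((TensorProduct.assoc K (TensorAlgebra K V) (TensorAlgebra K V)
                (TensorAlgebra K V)).symm
              (LinearMap.lTensor (TensorAlgebra K V) (deshuffle K V).toLinearMap θ))) := by
    intro A θ
    induction A using TensorProduct.induction_on with
    | zero => simp only [map_zero, LinearMap.zero_apply, LinearMap.comp_zero,
        LinearMap.rTensor_zero, TensorProduct.map_zero_left]
    | add A₁ A₂ ih₁ ih₂ =>
      simp only [map_add, LinearMap.add_apply, LinearMap.comp_add, LinearMap.rTensor_add,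
        TensorProduct.map_add_left, ih₁, ih₂]
    | tmul u v =>
      induction θ using TensorProduct.induction_on with
      | zero => simp only [map_zero]
      | add θ₁ θ₂ ih₁ ih₂ => simp only [map_add, LinearMap.add_apply, ih₁, ih₂]
      | tmul w₁ w₂ =>
        simp only [TensorProduct.map_tmul, TensorProduct.homTensorHomMap_apply,
          LinearMap.rTensor_tmul, LinearMap.lTensor_tmul, LinearMap.mul'_apply,
          AlgHom.toLinearMap_apply]
        rw [star_circ hstar, circ_apply]
        generalize deshuffle K V w₂ = ξ₂
        induction ξ₂ using TensorProduct.induction_on with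
        | zero => simp only [map_zero, TensorProduct.tmul_zero, mul_zero]
        | add χ₁ χ₂ ih₁ ih₂ =>
          simp only [map_add, TensorProduct.tmul_add, ih₁, ih₂, mul_add]
        | tmul d₁ d₂ =>
          simp only [TensorProduct.assoc_symm_tmul, LinearMap.rTensor_tmul,
            LinearMap.comp_apply, sOp_tmul, TensorProduct.map_tmul,
            LinearMap.mul'_apply, mul_assoc]
  rw [circ_apply (circLM star f g) h, claim_L, circ_apply f (circLM star g h),
    deshuffle_circ hstar g h, claim_R, ← coassoc h, LinearEquiv.symm_apply_apply]

end Final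

end CH

/-- `(T(V), ⊛, Δ_⧢)` is a Hopf algebra: `⊛` is associative with
unit `1`, and `Δ_⧢` is an algebra morphism for `⊛` (where `T(V) ⊗ T(V)` carries
the componentwise product `⊛ ⊗ ⊛`). -/
theorem circ_hopf (m : V →ₗ[K] V →ₗ[K] V)
    (star : TensorAlgebra K V →ₗ[K] TensorAlgebra K V →ₗ[K] TensorAlgebra K V)
    (hstar : IsMagExt m star) :
    (∀ f g h : TensorAlgebra K V,
        circLM star (circLM star f g) h = circLM star f (circLM star g h)) ∧
    (∀ f : TensorAlgebra K V, circLM star f 1 = f) ∧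
    (∀ f : TensorAlgebra K V, circLM star 1 f = f) ∧
    (∀ f g : TensorAlgebra K V,
        deshuffle K V (circLM star f g)
          = TensorProduct.homTensorHomMap (RingHom.id K) (TensorAlgebra K V) (TensorAlgebra K V)
              (TensorAlgebra K V) (TensorAlgebra K V)
              (TensorProduct.map (circLM star) (circLM star) (deshuffle K V f))
              (deshuffle K V g)) :=
  ⟨fun f g h => CH.circ_assoc hstar f g h,
    fun f => CH.circ_one hstar f,
    fun f => CH.one_circ hstar f,
    fun f g => CH.deshuffle_circ hstar f g⟩

end
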